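/- arXiv:2312.08823 — 5 statements merged into one kernel-verified Lean document; each statement's English description precedes it below -/
import Mathlib

section
/- Let M be a real symmetric positive definite d×d matrix and let s ∈ [0, 1) be such that (1 − s)²·I ⪯ M ⪯ (1 − s)^{−2}·I in the Loewner order (I the d×d identity). Then trace(M) − d − log det(M) ≤ 4·d·s²/(1 − s)². -/
open Matrix Finset in
lemma aux_trace_stmt5 {d : ℕ} {A : Matrix (Fin d) (Fin d) ℝ} (hA : A.IsHermitian) :
    A.trace = ∑ i, hA.eigenvalues i := by
  rw [hA.trace_eq_sum_eigenvalues]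
  simp

open Matrix in
lemma aux_dot_stmt5 {d : ℕ} {A : Matrix (Fin d) (Fin d) ℝ} (hA : A.IsHermitian)
    (B : Matrix (Fin d) (Fin d) ℝ) (c : ℝ) (i : Fin d)
    (hB : B = A - c • (1 : Matrix (Fin d) (Fin d) ℝ)) :
    star ⇑(hA.eigenvectorBasis i) ⬝ᵥ (B *ᵥ ⇑(hA.eigenvectorBasis i))
      = hA.eigenvalues i - c := by
  have key : (star ⇑(hA.eigenvectorBasis i)) ⬝ᵥ ⇑(hA.eigenvectorBasis i) = 1 := by
    have hn := hA.eigenvectorBasis.orthonormal.1 i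
    have hin : (inner ℝ (hA.eigenvectorBasis i) (hA.eigenvectorBasis i) : ℝ) = 1 := by
      rw [real_inner_self_eq_norm_sq, hn]; norm_num
    rw [← hin, PiLp.inner_apply]
    simp [dotProduct, RCLike.inner_apply, mul_comm, sq]
  rw [hB, sub_mulVec, dotProduct_sub, smul_mulVec, one_mulVec, dotProduct_smul]
  erw [hA.mulVec_eigenvectorBasis, dotProduct_smul, key]
  simp

open Matrix in
lemma aux_eig_ge_stmt5 {d : ℕ} {A : Matrix (Fin d) (Fin d) ℝ} (hA : A.IsHermitian) (c : ℝ)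
    (h : (A - c • (1 : Matrix (Fin d) (Fin d) ℝ)).PosSemidef) (i : Fin d) :
    c ≤ hA.eigenvalues i := by
  have h2 := h.dotProduct_mulVec_nonneg ⇑(hA.eigenvectorBasis i)
  erw [aux_dot_stmt5 hA _ c i rfl] at h2
  simpa using h2

open Matrix in
lemma aux_eig_le_stmt5 {d : ℕ} {A : Matrix (Fin d) (Fin d) ℝ} (hA : A.IsHermitian) (c : ℝ)
    (h : (c • (1 : Matrix (Fin d) (Fin d) ℝ) - A).PosSemidef) (i : Fin d) :
    hA.eigenvalues i ≤ c := by
  have h2 := h.dotProduct_mulVec_nonneg ⇑(hA.eigenvectorBasis i)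
  have : c • (1 : Matrix (Fin d) (Fin d) ℝ) - A
      = -(A - c • (1 : Matrix (Fin d) (Fin d) ℝ)) := (neg_sub _ _).symm
  rw [this, neg_mulVec, dotProduct_neg] at h2
  erw [aux_dot_stmt5 hA _ c i rfl] at h2
  simp at h2
  linarith

lemma aux_scalar_stmt5 {s x : ℝ} (hs0 : 0 ≤ s) (hs1 : s < 1)
    (hl : (1 - s) ^ 2 ≤ x) (hu : x ≤ ((1 - s) ^ 2)⁻¹) :
    x - 1 - Real.log x ≤ 4 * s ^ 2 / (1 - s) ^ 2 := by
  have ha' : (0:ℝ) < 1 - s := by linarith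
  have ha : (0:ℝ) < (1 - s) ^ 2 := by positivity
  have hx : 0 < x := lt_of_lt_of_le ha hl
  have hlog : 1 - x⁻¹ ≤ Real.log x := Real.one_sub_inv_le_log_of_pos hx
  have h1 : x - 1 - Real.log x ≤ x - 2 + x⁻¹ := by linarith
  have hxi : x * x⁻¹ = 1 := mul_inv_cancel₀ hx.ne'
  have hai : (1 - s) ^ 2 * ((1 - s) ^ 2)⁻¹ = 1 := mul_inv_cancel₀ ha.ne'
  have hquad : (x - (1 - s) ^ 2) * (x - ((1 - s) ^ 2)⁻¹) ≤ 0 :=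
    mul_nonpos_of_nonneg_of_nonpos (by linarith) (by linarith)
  -- (x-1)^2 ≤ x * (a + a⁻¹ - 2) where a = (1-s)^2
  have hainv : (0:ℝ) < ((1 - s) ^ 2)⁻¹ := by positivity
  have e1 : x - 2 + x⁻¹ = (x - 1) ^ 2 * x⁻¹ := by field_simp; ring
  have e2 : (x - 1) ^ 2 ≤ x * ((1 - s) ^ 2 + ((1 - s) ^ 2)⁻¹ - 2) := by
    nlinarith [hquad, hai]
  have step2 : x - 2 + x⁻¹ ≤ (1 - s) ^ 2 + ((1 - s) ^ 2)⁻¹ - 2 := by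
    rw [e1]
    calc (x - 1) ^ 2 * x⁻¹
        ≤ (x * ((1 - s) ^ 2 + ((1 - s) ^ 2)⁻¹ - 2)) * x⁻¹ :=
          mul_le_mul_of_nonneg_right e2 (inv_nonneg.2 hx.le)
      _ = (1 - s) ^ 2 + ((1 - s) ^ 2)⁻¹ - 2 := by
          rw [mul_comm x, mul_assoc, hxi, mul_one]
  have step3 : (1 - s) ^ 2 + ((1 - s) ^ 2)⁻¹ - 2 ≤ 4 * s ^ 2 * ((1 - s) ^ 2)⁻¹ := by
    rw [← mul_le_mul_iff_of_pos_right ha]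
    have hfact : 0 ≤ s * s * (s * (4 - s)) :=
      mul_nonneg (mul_nonneg hs0 hs0) (mul_nonneg hs0 (by linarith))
    nlinarith [hai, hfact]
  rw [div_eq_mul_inv]
  linarith

/-- If `M` is symmetric positive definite with `(1 − s)²·I ⪯ M ⪯ (1 − s)⁻²·I`
for `s ∈ [0, 1)`, then `trace M − d − log det M ≤ 4·d·s²/(1 − s)²`. -/
theorem stmt5 (d : ℕ) (M : Matrix (Fin d) (Fin d) ℝ) (hM : M.PosDef) (s : ℝ)
    (hs0 : 0 ≤ s) (hs1 : s < 1)
    (hlow : (M - (1 - s) ^ 2 • (1 : Matrix (Fin d) (Fin d) ℝ)).PosSemidef)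
    (hupp : ((((1 - s) ^ 2)⁻¹ • (1 : Matrix (Fin d) (Fin d) ℝ)) - M).PosSemidef) :
    M.trace - d - Real.log M.det ≤ 4 * d * s ^ 2 / (1 - s) ^ 2 := by
  have hH := hM.1
  have hpos : ∀ i, 0 < hH.eigenvalues i := hM.eigenvalues_pos
  have hdet : M.det = ∏ i, hH.eigenvalues i := by
    have := hH.det_eq_prod_eigenvalues
    simpa using this
  have hlogdet : Real.log M.det = ∑ i, Real.log (hH.eigenvalues i) := by
    rw [hdet, Real.log_prod]
    exact fun i _ => (hpos i).ne'
  rw [aux_trace_stmt5 hH, hlogdet]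
  have : (∑ i, hH.eigenvalues i) - (d:ℝ) - ∑ i, Real.log (hH.eigenvalues i)
      = ∑ i : Fin d, (hH.eigenvalues i - 1 - Real.log (hH.eigenvalues i)) := by
    simp [Finset.sum_sub_distrib]
  rw [this]
  calc ∑ i : Fin d, (hH.eigenvalues i - 1 - Real.log (hH.eigenvalues i))
      ≤ ∑ _i : Fin d, 4 * s ^ 2 / (1 - s) ^ 2 := by
        apply Finset.sum_le_sum
        intro i _
        exact aux_scalar_stmt5 hs0 hs1 (aux_eig_ge_stmt5 hH _ hlow i)
          (aux_eig_le_stmt5 hH _ hupp i)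
    _ = 4 * d * s ^ 2 / (1 - s) ^ 2 := by
        simp [Finset.sum_const]
        ring
end

section
/- Let m, d ≥ 1, and for each i ∈ {1,…,m} let M_i be a real symmetric positive definite d×d matrix and c_i ∈ ℝ^d. Let K = {z ∈ ℝ^d : ‖z − c_i‖²_{M_i} ≤ 1 for all i}, and let x ∈ ℝ^d satisfy ‖x − c_i‖²_{M_i} < 1 for all i. Define Q_x(y) = Σ_{i=1}^m [2·(1 − ‖x − c_i‖²_{M_i})·‖y − x‖²_{M_i} + 4·⟨y − x, x − c_i⟩²_{M_i}] / (1 − ‖x − c_i‖²_{M_i})². Then: (a) every y ∈ ℝ^d with Q_x(y) ≤ 1 satisfies y ∈ K and 2x − y ∈ K; and (b) every y ∈ ℝ^d with y ∈ K and 2x − y ∈ K satisfies Q_x(y) ≤ 2m. -/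
open Matrix

lemma dot_symm {d : ℕ} (M : Matrix (Fin d) (Fin d) ℝ) (hM : M.IsHermitian)
    (u v : Fin d → ℝ) : u ⬝ᵥ M *ᵥ v = v ⬝ᵥ M *ᵥ u := by
  rw [Matrix.dotProduct_mulVec, ← Matrix.mulVec_transpose,
    show Mᵀ = M from hM, dotProduct_comm]

lemma dot_nonneg {d : ℕ} (M : Matrix (Fin d) (Fin d) ℝ) (hM : M.PosSemidef)
    (u : Fin d → ℝ) : 0 ≤ u ⬝ᵥ M *ᵥ u := by
  simpa using hM.re_dotProduct_nonneg u

lemma dot_expand_add {d : ℕ} (M : Matrix (Fin d) (Fin d) ℝ) (hM : M.IsHermitian)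
    (u w : Fin d → ℝ) :
    (u + w) ⬝ᵥ M *ᵥ (u + w) = u ⬝ᵥ M *ᵥ u + 2 * (u ⬝ᵥ M *ᵥ w) + w ⬝ᵥ M *ᵥ w := by
  simp only [Matrix.mulVec_add, add_dotProduct, dotProduct_add]
  rw [dot_symm M hM w u]; ring

lemma dot_expand_sub {d : ℕ} (M : Matrix (Fin d) (Fin d) ℝ) (hM : M.IsHermitian)
    (u w : Fin d → ℝ) :
    (w - u) ⬝ᵥ M *ᵥ (w - u) = u ⬝ᵥ M *ᵥ u - 2 * (u ⬝ᵥ M *ᵥ w) + w ⬝ᵥ M *ᵥ w := by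
  simp only [Matrix.mulVec_sub, sub_dotProduct, dotProduct_sub]
  rw [dot_symm M hM w u]; ring

/-- The log-barrier of an intersection of `m` ellipsoids is a symmetric barrier
with parameter `2m`: the unit Dikin ellipsoid at `x` is contained in
`K ∩ (2x − K)`, which is contained in the Dikin ellipsoid of radius `√(2m)`. -/
theorem stmt9 (m d : ℕ) (hm : 1 ≤ m) (hd : 1 ≤ d)
    (M : Fin m → Matrix (Fin d) (Fin d) ℝ) (hM : ∀ i, (M i).PosDef)
    (c : Fin m → Fin d → ℝ) (x : Fin d → ℝ)
    (hx : ∀ i, (x - c i) ⬝ᵥ (M i) *ᵥ (x - c i) < 1) :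
    (∀ y : Fin d → ℝ,
      (∑ i, (2 * (1 - (x - c i) ⬝ᵥ (M i) *ᵥ (x - c i)) * ((y - x) ⬝ᵥ (M i) *ᵥ (y - x))
          + 4 * ((y - x) ⬝ᵥ (M i) *ᵥ (x - c i)) ^ 2)
          / (1 - (x - c i) ⬝ᵥ (M i) *ᵥ (x - c i)) ^ 2) ≤ 1 →
      (∀ i, (y - c i) ⬝ᵥ (M i) *ᵥ (y - c i) ≤ 1) ∧
      (∀ i, (2 • x - y - c i) ⬝ᵥ (M i) *ᵥ (2 • x - y - c i) ≤ 1)) ∧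
    (∀ y : Fin d → ℝ,
      (∀ i, (y - c i) ⬝ᵥ (M i) *ᵥ (y - c i) ≤ 1) →
      (∀ i, (2 • x - y - c i) ⬝ᵥ (M i) *ᵥ (2 • x - y - c i) ≤ 1) →
      (∑ i, (2 * (1 - (x - c i) ⬝ᵥ (M i) *ᵥ (x - c i)) * ((y - x) ⬝ᵥ (M i) *ᵥ (y - x))
          + 4 * ((y - x) ⬝ᵥ (M i) *ᵥ (x - c i)) ^ 2)
          / (1 - (x - c i) ⬝ᵥ (M i) *ᵥ (x - c i)) ^ 2) ≤ 2 * (m : ℝ)) := by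
  -- abbreviations
  have hsymm : ∀ i, (M i).IsHermitian := fun i => (hM i).1
  have key1 : ∀ (y : Fin d → ℝ) (i : Fin m),
      y - c i = (y - x) + (x - c i) := by intro y i; abel
  have key2 : ∀ (y : Fin d → ℝ) (i : Fin m),
      2 • x - y - c i = (x - c i) - (y - x) := by
    intro y i
    have : (2 : ℕ) • x = x + x := two_nsmul x
    rw [this]; abel
  have ha : ∀ (y : Fin d → ℝ) (i : Fin m), 0 ≤ (y - x) ⬝ᵥ (M i) *ᵥ (y - x) :=
    fun y i => dot_nonneg _ (hM i).posSemidef _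
  have ht : ∀ i : Fin m, 0 < 1 - (x - c i) ⬝ᵥ (M i) *ᵥ (x - c i) :=
    fun i => by linarith [hx i]
  have termnn : ∀ (y : Fin d → ℝ) (i : Fin m),
      0 ≤ (2 * (1 - (x - c i) ⬝ᵥ (M i) *ᵥ (x - c i)) * ((y - x) ⬝ᵥ (M i) *ᵥ (y - x))
          + 4 * ((y - x) ⬝ᵥ (M i) *ᵥ (x - c i)) ^ 2)
          / (1 - (x - c i) ⬝ᵥ (M i) *ᵥ (x - c i)) ^ 2 := by
    intro y i
    apply div_nonneg _ (sq_nonneg _)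
    have := ha y i; have := ht i
    nlinarith [sq_nonneg ((y - x) ⬝ᵥ (M i) *ᵥ (x - c i))]
  constructor
  · intro y hQ
    -- each term of the sum is ≤ 1
    have hterm : ∀ i : Fin m,
        (2 * (1 - (x - c i) ⬝ᵥ (M i) *ᵥ (x - c i)) * ((y - x) ⬝ᵥ (M i) *ᵥ (y - x))
          + 4 * ((y - x) ⬝ᵥ (M i) *ᵥ (x - c i)) ^ 2)
          / (1 - (x - c i) ⬝ᵥ (M i) *ᵥ (x - c i)) ^ 2 ≤ 1 := by
      intro i
      calc _ ≤ ∑ j, (2 * (1 - (x - c j) ⬝ᵥ (M j) *ᵥ (x - c j)) * ((y - x) ⬝ᵥ (M j) *ᵥ (y - x))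
          + 4 * ((y - x) ⬝ᵥ (M j) *ᵥ (x - c j)) ^ 2)
          / (1 - (x - c j) ⬝ᵥ (M j) *ᵥ (x - c j)) ^ 2 :=
            Finset.single_le_sum (fun j _ => termnn y j) (Finset.mem_univ i)
        _ ≤ 1 := hQ
    have hkey : ∀ i : Fin m,
        2 * (1 - (x - c i) ⬝ᵥ (M i) *ᵥ (x - c i)) * ((y - x) ⬝ᵥ (M i) *ᵥ (y - x))
          + 4 * ((y - x) ⬝ᵥ (M i) *ᵥ (x - c i)) ^ 2
          ≤ (1 - (x - c i) ⬝ᵥ (M i) *ᵥ (x - c i)) ^ 2 := by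
      intro i
      have h := hterm i
      have h2 := (div_le_one (pow_pos (ht i) 2)).mp h
      linarith
    constructor
    · intro i
      rw [key1 y i, dot_expand_add (M i) (hsymm i)]
      have h := hkey i
      have h1 := ha y i
      have h2 := ht i
      set a := (y - x) ⬝ᵥ (M i) *ᵥ (y - x) with ha'
      set b := (y - x) ⬝ᵥ (M i) *ᵥ (x - c i) with hb'
      set s := (x - c i) ⬝ᵥ (M i) *ᵥ (x - c i) with hs'
      have h3 : 0 ≤ 1 - s - 2 * a := by nlinarith [sq_nonneg b]
      have h4 : (2 * b) ^ 2 ≤ (1 - s - a) ^ 2 := by nlinarith [sq_nonneg a]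
      have h5 := abs_le_of_sq_le_sq' h4 (by linarith)
      linarith [h5.1, h5.2]
    · intro i
      rw [key2 y i, dot_expand_sub (M i) (hsymm i)]
      have h := hkey i
      have h1 := ha y i
      have h2 := ht i
      set a := (y - x) ⬝ᵥ (M i) *ᵥ (y - x) with ha'
      set b := (y - x) ⬝ᵥ (M i) *ᵥ (x - c i) with hb'
      set s := (x - c i) ⬝ᵥ (M i) *ᵥ (x - c i) with hs'
      have h3 : 0 ≤ 1 - s - 2 * a := by nlinarith [sq_nonneg b]
      have h4 : (2 * b) ^ 2 ≤ (1 - s - a) ^ 2 := by nlinarith [sq_nonneg a]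
      have h5 := abs_le_of_sq_le_sq' h4 (by linarith)
      linarith [h5.1, h5.2]
  · intro y hK1 hK2
    have hterm : ∀ i : Fin m,
        (2 * (1 - (x - c i) ⬝ᵥ (M i) *ᵥ (x - c i)) * ((y - x) ⬝ᵥ (M i) *ᵥ (y - x))
          + 4 * ((y - x) ⬝ᵥ (M i) *ᵥ (x - c i)) ^ 2)
          / (1 - (x - c i) ⬝ᵥ (M i) *ᵥ (x - c i)) ^ 2 ≤ 2 := by
      intro i
      rw [div_le_iff₀ (pow_pos (ht i) 2)]
      have e1 := hK1 i
      have e2 := hK2 i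
      rw [key1 y i, dot_expand_add (M i) (hsymm i)] at e1
      rw [key2 y i, dot_expand_sub (M i) (hsymm i)] at e2
      have h1 := ha y i
      have h2 := ht i
      set a := (y - x) ⬝ᵥ (M i) *ᵥ (y - x) with ha'
      set b := (y - x) ⬝ᵥ (M i) *ᵥ (x - c i) with hb'
      set s := (x - c i) ⬝ᵥ (M i) *ᵥ (x - c i) with hs'
      nlinarith [mul_nonneg (by linarith : (0:ℝ) ≤ (1 - s) - a - 2 * b)
        (by linarith : (0:ℝ) ≤ (1 - s) - a + 2 * b)]
    calc (∑ i, (2 * (1 - (x - c i) ⬝ᵥ (M i) *ᵥ (x - c i)) * ((y - x) ⬝ᵥ (M i) *ᵥ (y - x))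
          + 4 * ((y - x) ⬝ᵥ (M i) *ᵥ (x - c i)) ^ 2)
          / (1 - (x - c i) ⬝ᵥ (M i) *ᵥ (x - c i)) ^ 2)
        ≤ ∑ _i : Fin m, (2 : ℝ) := Finset.sum_le_sum fun i _ => hterm i
      _ = 2 * (m : ℝ) := by simp [mul_comm]
end

section
/- Let A ∈ ℝ^{m×d} with rows a_1,…,a_m, let b ∈ ℝ^m, let K = {z ∈ ℝ^d : a_iᵀz ≤ b_i for all i ∈ {1,…,m}}, and let x ∈ ℝ^d satisfy a_iᵀx < b_i for all i. Define Q_x(y) = Σ_{i=1}^m (a_iᵀ(y − x))²/(b_i − a_iᵀx)². Then: (a) every y ∈ ℝ^d with Q_x(y) ≤ 1 satisfies y ∈ K and 2x − y ∈ K; and (b) every y ∈ ℝ^d with y ∈ K and 2x − y ∈ K satisfies Q_x(y) ≤ m. -/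
open Matrix

/-- The log-barrier of a polytope given by `m` linear inequality constraints is
a symmetric barrier with parameter `m`: the unit Dikin ellipsoid at `x` is
contained in `K ∩ (2x − K)`, which is contained in the Dikin ellipsoid of
radius `√m`. Here `a i` is the `i`-th row of the constraint matrix. -/
theorem stmt10 (m d : ℕ) (hm : 1 ≤ m) (hd : 1 ≤ d)
    (a : Fin m → Fin d → ℝ) (b : Fin m → ℝ)
    (x : Fin d → ℝ) (hx : ∀ i, a i ⬝ᵥ x < b i) :
    (∀ y : Fin d → ℝ,
      (∑ i, (a i ⬝ᵥ (y - x)) ^ 2 / (b i - a i ⬝ᵥ x) ^ 2) ≤ 1 →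
      (∀ i, a i ⬝ᵥ y ≤ b i) ∧ (∀ i, a i ⬝ᵥ (2 • x - y) ≤ b i)) ∧
    (∀ y : Fin d → ℝ,
      (∀ i, a i ⬝ᵥ y ≤ b i) → (∀ i, a i ⬝ᵥ (2 • x - y) ≤ b i) →
      (∑ i, (a i ⬝ᵥ (y - x)) ^ 2 / (b i - a i ⬝ᵥ x) ^ 2) ≤ m) := by
  have hpos : ∀ i, 0 < b i - a i ⬝ᵥ x := fun i => sub_pos.2 (hx i)
  constructor
  · intro y hy
    have key : ∀ i, |a i ⬝ᵥ (y - x)| ≤ b i - a i ⬝ᵥ x := by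
      intro i
      have h1 : (a i ⬝ᵥ (y - x)) ^ 2 / (b i - a i ⬝ᵥ x) ^ 2 ≤ 1 := by
        refine le_trans ?_ hy
        refine Finset.single_le_sum (f := fun j => (a j ⬝ᵥ (y - x)) ^ 2 / (b j - a j ⬝ᵥ x) ^ 2)
          (fun j _ => by positivity) (Finset.mem_univ i)
      have h2 : (a i ⬝ᵥ (y - x)) ^ 2 ≤ (b i - a i ⬝ᵥ x) ^ 2 := by
        have := (div_le_one (pow_pos (hpos i) 2)).1 h1
        linarith
      have hp := hpos i
      refine abs_le.2 ⟨?_, ?_⟩ <;>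
        nlinarith [sq_nonneg (a i ⬝ᵥ (y - x) - (b i - a i ⬝ᵥ x)),
          sq_nonneg (a i ⬝ᵥ (y - x) + (b i - a i ⬝ᵥ x))]
    constructor
    · intro i
      have := (abs_le.1 (key i)).2
      have hs : a i ⬝ᵥ (y - x) = a i ⬝ᵥ y - a i ⬝ᵥ x := dotProduct_sub _ _ _
      linarith [hs ▸ this]
    · intro i
      have := (abs_le.1 (key i)).1
      have hs : a i ⬝ᵥ (y - x) = a i ⬝ᵥ y - a i ⬝ᵥ x := dotProduct_sub _ _ _
      have h2 : a i ⬝ᵥ (2 • x - y) = 2 * (a i ⬝ᵥ x) - a i ⬝ᵥ y := by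
        rw [dotProduct_sub]
        simp [dotProduct_smul, two_smul]
        ring
      rw [h2]
      rw [hs] at this
      linarith
  · intro y h1 h2
    have key : ∀ i, (a i ⬝ᵥ (y - x)) ^ 2 / (b i - a i ⬝ᵥ x) ^ 2 ≤ 1 := by
      intro i
      have hs : a i ⬝ᵥ (y - x) = a i ⬝ᵥ y - a i ⬝ᵥ x := dotProduct_sub _ _ _
      have h2' : a i ⬝ᵥ (2 • x - y) = 2 * (a i ⬝ᵥ x) - a i ⬝ᵥ y := by
        rw [dotProduct_sub]
        simp [dotProduct_smul, two_smul]
        ring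
      have hb1 : a i ⬝ᵥ y - a i ⬝ᵥ x ≤ b i - a i ⬝ᵥ x := by linarith [h1 i]
      have hb2 : -(b i - a i ⬝ᵥ x) ≤ a i ⬝ᵥ y - a i ⬝ᵥ x := by
        have := h2 i; rw [h2'] at this; linarith
      have habs : |a i ⬝ᵥ (y - x)| ≤ b i - a i ⬝ᵥ x := by
        rw [hs]; exact abs_le.2 ⟨hb2, hb1⟩
      rw [div_le_one (pow_pos (hpos i) 2)]
      calc (a i ⬝ᵥ (y - x)) ^ 2 = |a i ⬝ᵥ (y - x)| ^ 2 := (sq_abs _).symm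
        _ ≤ (b i - a i ⬝ᵥ x) ^ 2 := pow_le_pow_left₀ (abs_nonneg _) habs 2
    calc (∑ i, (a i ⬝ᵥ (y - x)) ^ 2 / (b i - a i ⬝ᵥ x) ^ 2)
        ≤ ∑ _i : Fin m, (1:ℝ) := Finset.sum_le_sum (fun i _ => key i)
      _ = m := by simp
end

section
/- For every y ∈ ℝ^d there exists a unique x ∈ ℝ^d with x_i > 0 for all i ∈ {1,…,d} and Σ_{i=1}^d x_i < 1 such that y_i = −1/x_i + 1/(1 − Σ_{j=1}^d x_j) for every i ∈ {1,…,d}. -/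
private lemma simplex_mono_aux (d : ℕ) (y x x' : Fin d → ℝ)
    (hx : (∀ i, 0 < x i) ∧ (∑ i, x i) < 1 ∧
      ∀ i, y i = -(1 / x i) + 1 / (1 - ∑ j, x j))
    (hx' : (∀ i, 0 < x' i) ∧ (∑ i, x' i) < 1 ∧
      ∀ i, y i = -(1 / x' i) + 1 / (1 - ∑ j, x' j))
    (hsum : (∑ i, x i) ≤ ∑ i, x' i) : ∀ i, x' i ≤ x i := by
  obtain ⟨hp, hs, he⟩ := hx
  obtain ⟨hp', hs', he'⟩ := hx'
  have hspos : (0:ℝ) < 1 - ∑ i, x i := by linarith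
  have hspos' : (0:ℝ) < 1 - ∑ i, x' i := by linarith
  have hle : 1 - ∑ i, x' i ≤ 1 - ∑ i, x i := by linarith
  have ht : 1 / (1 - ∑ i, x i) ≤ 1 / (1 - ∑ i, x' i) :=
    one_div_le_one_div_of_le hspos' hle
  intro i
  have h1 : 1 / x i = 1 / (1 - ∑ j, x j) - y i := by have := he i; linarith
  have h2 : 1 / x' i = 1 / (1 - ∑ j, x' j) - y i := by have := he' i; linarith
  have h3 : 1 / x i ≤ 1 / x' i := by rw [h1, h2]; linarith
  exact le_of_one_div_le_one_div (hp i) h3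

/-- The gradient of the log-barrier of the simplex is a bijection from the open
simplex onto `ℝ^d`: for every `y ∈ ℝ^d` there is a unique `x` in the open
simplex with `yᵢ = −1/xᵢ + 1/(1 − Σⱼ xⱼ)` for all `i`. -/
theorem stmt11 (d : ℕ) (y : Fin d → ℝ) :
    ∃! x : Fin d → ℝ, (∀ i, 0 < x i) ∧ (∑ i, x i) < 1 ∧
      ∀ i, y i = -(1 / x i) + 1 / (1 - ∑ j, x j) := by
  -- uniqueness (works for any two solutions)
  have uniq : ∀ x x' : Fin d → ℝ,
      ((∀ i, 0 < x i) ∧ (∑ i, x i) < 1 ∧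
        ∀ i, y i = -(1 / x i) + 1 / (1 - ∑ j, x j)) →
      ((∀ i, 0 < x' i) ∧ (∑ i, x' i) < 1 ∧
        ∀ i, y i = -(1 / x' i) + 1 / (1 - ∑ j, x' j)) → x = x' := by
    intro x x' hx hx'
    have hsum : (∑ i, x i) = ∑ i, x' i := by
      rcases le_total (∑ i, x i) (∑ i, x' i) with h | h
      · exact le_antisymm h (Finset.sum_le_sum fun i _ =>
          simplex_mono_aux d y x x' hx hx' h i)
      · exact le_antisymm (Finset.sum_le_sum fun i _ =>
          simplex_mono_aux d y x' x hx' hx h i) h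
    funext i
    have h1 := hx.2.2 i
    have h2 := hx'.2.2 i
    rw [hsum] at h1
    have hinv : 1 / x i = 1 / x' i := by linarith
    have hxi := hx.1 i
    have hxi' := hx'.1 i
    field_simp at hinv
    linarith
  rcases Nat.eq_zero_or_pos d with h0 | hd
  · subst h0
    refine ⟨fun i => i.elim0, ⟨fun i => i.elim0, by simp, fun i => i.elim0⟩,
      fun x' hx' => uniq x' (fun i => i.elim0) hx' ⟨fun i => i.elim0, by simp, fun i => i.elim0⟩⟩
  -- existence
  obtain ⟨i₀, -, hi₀⟩ := Finset.exists_max_image Finset.univ y ⟨⟨0, hd⟩, Finset.mem_univ _⟩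
  set a : ℝ := max (y i₀) 0 + 1 with ha
  set b : ℝ := a + 2 * d + 2 with hb
  have ha1 : 1 ≤ a := by have := le_max_right (y i₀) 0; linarith
  have hay : ∀ i, y i < a := fun i => by
    have h1 := hi₀ i (Finset.mem_univ i)
    have := le_max_left (y i₀) 0
    linarith
  have hab : a ≤ b := by have hd0 : (0:ℝ) ≤ d := Nat.cast_nonneg d; rw [hb]; linarith
  set g : ℝ → ℝ := fun t => (∑ i, 1 / (t - y i)) + 1 / t with hg
  have hcont : ContinuousOn g (Set.Icc a b) := by
    apply ContinuousOn.add
    · apply continuousOn_finset_sum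
      intro i _
      apply ContinuousOn.div continuousOn_const
        ((continuous_id.sub continuous_const).continuousOn)
      intro t ht
      have : y i < t := lt_of_lt_of_le (hay i) ht.1
      show t - y i ≠ 0
      linarith
    · apply ContinuousOn.div continuousOn_const continuousOn_id
      intro t ht
      have : (1:ℝ) ≤ t := le_trans ha1 ht.1
      simp only [id_eq]
      linarith
  have hga : 1 ≤ g a := by
    have hterm : 1 / (a - y i₀) ≤ ∑ i, 1 / (a - y i) := by
      apply Finset.single_le_sum (f := fun i => 1 / (a - y i))
        (fun i _ => le_of_lt (one_div_pos.mpr (by linarith [hay i]))) (Finset.mem_univ i₀)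
    have hpa : 0 < a := by linarith
    rcases le_total 0 (y i₀) with h | h
    · have : a - y i₀ = 1 := by rw [ha, max_eq_left h]; ring
      have h1 : 1 / (a - y i₀) = 1 := by rw [this]; norm_num
      have h2 : 0 < 1 / a := by positivity
      simp only [hg]; linarith
    · have : a = 1 := by rw [ha, max_eq_right h]; ring
      have h2 : 1 / a = 1 := by rw [this]; norm_num
      have h3 : 0 < 1 / (a - y i₀) := one_div_pos.mpr (by linarith [hay i₀])
      simp only [hg]; linarith
  have hgb : g b ≤ 1 := by
    have hterm : ∀ i, 1 / (b - y i) ≤ 1 / (2 * d + 3) := by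
      intro i
      apply one_div_le_one_div_of_le (by positivity)
      have h1 := hi₀ i (Finset.mem_univ i)
      have := le_max_left (y i₀) 0
      rw [hb, ha]; linarith
    have hsum : (∑ i, 1 / (b - y i)) ≤ ∑ _i : Fin d, 1 / (2 * (d:ℝ) + 3) :=
      Finset.sum_le_sum fun i _ => hterm i
    have hs2 : (∑ _i : Fin d, 1 / (2 * (d:ℝ) + 3)) = d / (2 * d + 3) := by
      rw [Finset.sum_const, Finset.card_univ, Fintype.card_fin, nsmul_eq_mul]
      field_simp
    have hbig : (2:ℝ) * d + 3 ≤ b := by rw [hb]; linarith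
    have hbinv : 1 / b ≤ 1 / (2 * (d:ℝ) + 3) :=
      one_div_le_one_div_of_le (by positivity) hbig
    have hfrac : (d:ℝ) / (2 * d + 3) + 1 / (2 * (d:ℝ) + 3) ≤ 1 := by
      rw [← add_div, div_le_one (by positivity)]
      linarith [Nat.cast_nonneg (α := ℝ) d]
    simp only [hg]
    calc (∑ i, 1 / (b - y i)) + 1 / b
        ≤ (d:ℝ) / (2 * d + 3) + 1 / (2 * (d:ℝ) + 3) := by
          rw [← hs2]; exact add_le_add hsum hbinv
      _ ≤ 1 := hfrac
  have : (1:ℝ) ∈ Set.Icc (g b) (g a) := ⟨hgb, hga⟩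
  obtain ⟨t, htmem, htg⟩ := intermediate_value_Icc' hab hcont this
  have hta : a ≤ t := htmem.1
  have hty : ∀ i, y i < t := fun i => lt_of_lt_of_le (hay i) hta
  have htpos : (0:ℝ) < t := by linarith
  have hkey : (∑ i, 1 / (t - y i)) = 1 - 1 / t := by
    have := htg; simp only [hg] at this; linarith
  have htinv : 0 < 1 / t := one_div_pos.mpr htpos
  have hsol : (∀ i, 0 < (fun i => 1 / (t - y i)) i) ∧
      (∑ i, (fun i => 1 / (t - y i)) i) < 1 ∧
      ∀ i, y i = -(1 / (fun i => 1 / (t - y i)) i) +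
        1 / (1 - ∑ j, (fun i => 1 / (t - y i)) j) := by
    refine ⟨fun i => one_div_pos.mpr (by linarith [hty i]), ?_, ?_⟩
    · show (∑ i, 1 / (t - y i)) < 1
      rw [hkey]; linarith
    · intro i
      show y i = -(1 / (1 / (t - y i))) + 1 / (1 - ∑ j, 1 / (t - y j))
      rw [hkey]
      have h1 : 1 - (1 - 1 / t) = 1 / t := by ring
      rw [h1, one_div_one_div, one_div_one_div]
      ring
  exact ⟨_, hsol, fun x' hx' => uniq x' _ hx' hsol⟩
end

section
/- Let d ≥ 1, let a ∈ ℝ^{d+1} satisfy a_i > 0 for all i ∈ {1,…,d+1}, and let x ∈ ℝ^d satisfy x_i > 0 for all i and Σ_{i=1}^d x_i < 1. Let H(x) be the d×d matrix diag(1/x_1²,…,1/x_d²) + (1 − Σ_{j=1}^d x_j)^{−2}·𝟙𝟙ᵀ, where 𝟙 ∈ ℝ^d is the all-ones vector, and let g(x) ∈ ℝ^d have entries g(x)_i = −a_i/x_i + a_{d+1}/(1 − Σ_{j=1}^d x_j). Then H(x) is positive definite and g(x)ᵀ H(x)^{−1} g(x) ≤ ‖a‖², where ‖a‖ denotes the Euclidean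 norm of a in ℝ^{d+1}. -/
open Matrix

/-- On the open simplex, the Hessian `H(x)` of the log-barrier is positive
definite, and the gradient `g(x)` of the Dirichlet potential satisfies
`g(x)ᵀ H(x)⁻¹ g(x) ≤ ‖a‖²`: the Dirichlet potential is `‖a‖`-relatively
Lipschitz with respect to the log-barrier. -/
theorem stmt14 (d : ℕ) (hd : 1 ≤ d) (a : EuclideanSpace ℝ (Fin (d + 1)))
    (ha : ∀ i, 0 < a i) (x : Fin d → ℝ) (hx : ∀ i, 0 < x i)
    (hsum : ∑ i, x i < 1) :
    (Matrix.diagonal (fun i => 1 / (x i) ^ 2)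
        + ((1 - ∑ j, x j) ^ 2)⁻¹ • Matrix.of (fun _ _ : Fin d => (1 : ℝ))).PosDef ∧
    (fun i : Fin d => -(a i.castSucc) / x i + a (Fin.last d) / (1 - ∑ j, x j)) ⬝ᵥ
        ((Matrix.diagonal (fun i => 1 / (x i) ^ 2)
          + ((1 - ∑ j, x j) ^ 2)⁻¹ • Matrix.of (fun _ _ : Fin d => (1 : ℝ)))⁻¹ *ᵥ
        (fun i : Fin d => -(a i.castSucc) / x i + a (Fin.last d) / (1 - ∑ j, x j)))
      ≤ ‖a‖ ^ 2 := by
  set s : ℝ := 1 - ∑ j, x j with hs_def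
  have hs : 0 < s := by simp only [hs_def]; linarith
  have hs' : s ≠ 0 := ne_of_gt hs
  have hxi : ∀ i, x i ≠ 0 := fun i => ne_of_gt (hx i)
  set H : Matrix (Fin d) (Fin d) ℝ :=
    Matrix.diagonal (fun i => 1 / (x i) ^ 2)
      + (s ^ 2)⁻¹ • Matrix.of (fun _ _ : Fin d => (1 : ℝ)) with hH_def
  set g : Fin d → ℝ :=
    fun i => -(a i.castSucc) / x i + a (Fin.last d) / s with hg_def
  -- mulVec formula
  have hmv : ∀ v : Fin d → ℝ, ∀ i, (H *ᵥ v) i = v i / x i ^ 2 + (s ^ 2)⁻¹ * ∑ j, v j := by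
    intro v i
    simp only [hH_def, Matrix.mulVec, dotProduct, Matrix.add_apply,
      Matrix.diagonal_apply, Matrix.smul_apply, Matrix.of_apply, add_mul,
      Finset.sum_add_distrib, ite_mul, zero_mul, Finset.sum_ite_eq,
      Finset.mem_univ, if_true, smul_eq_mul, one_mul, ← Finset.mul_sum]
    ring
  have hquad : ∀ v : Fin d → ℝ,
      v ⬝ᵥ (H *ᵥ v) = ∑ i, (v i / x i) ^ 2 + ((∑ i, v i) / s) ^ 2 := by
    intro v
    simp only [dotProduct]
    calc ∑ i, v i * (H *ᵥ v) i
        = ∑ i, ((v i / x i) ^ 2 + v i * ((s ^ 2)⁻¹ * ∑ j, v j)) := by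
          refine Finset.sum_congr rfl fun i _ => ?_
          rw [hmv v i]
          field_simp
      _ = ∑ i, (v i / x i) ^ 2 + ((∑ i, v i) / s) ^ 2 := by
          rw [Finset.sum_add_distrib, ← Finset.sum_mul]
          field_simp
  -- positive definiteness
  have hposdef : H.PosDef := by
    refine Matrix.posDef_iff_dotProduct_mulVec.mpr ⟨?_, ?_⟩
    · rw [Matrix.IsHermitian]
      ext i j
      simp only [hH_def, Matrix.conjTranspose_apply, Matrix.add_apply,
        Matrix.diagonal_apply, Matrix.smul_apply, Matrix.of_apply, star_trivial]
      by_cases h : i = j <;> simp [h, Matrix.diagonal_apply, eq_comm]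
    · intro v hv
      rw [star_trivial, hquad v]
      have h1 : 0 < ∑ i, (v i / x i) ^ 2 := by
        obtain ⟨i, hi⟩ := Function.ne_iff.mp hv
        refine Finset.sum_pos' (fun j _ => sq_nonneg _) ⟨i, Finset.mem_univ i, ?_⟩
        have h0 : v i / x i ≠ 0 := div_ne_zero hi (hxi i)
        positivity
      have h2 : 0 ≤ ((∑ i, v i) / s) ^ 2 := sq_nonneg _
      linarith
  refine ⟨hposdef, ?_⟩
  -- Cauchy–Schwarz key inequality
  have hnorm : ‖a‖ ^ 2 = ∑ j, (a j) ^ 2 := by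
    rw [EuclideanSpace.norm_eq, Real.sq_sqrt (Finset.sum_nonneg fun j _ => sq_nonneg _)]
    simp [sq_abs]
  have hkey : ∀ v : Fin d → ℝ, (g ⬝ᵥ v) ^ 2 ≤ ‖a‖ ^ 2 * (v ⬝ᵥ (H *ᵥ v)) := by
    intro v
    set b : Fin (d + 1) → ℝ := Fin.lastCases (a (Fin.last d)) (fun i => -(a i.castSucc))
      with hb_def
    set p : Fin (d + 1) → ℝ := Fin.lastCases ((∑ i, v i) / s) (fun i => v i / x i)
      with hp_def
    have hbp : g ⬝ᵥ v = ∑ j, b j * p j := by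
      rw [Fin.sum_univ_castSucc]
      simp only [hb_def, hp_def, Fin.lastCases_castSucc, Fin.lastCases_last]
      simp only [dotProduct, hg_def, add_mul, Finset.sum_add_distrib,
        ← Finset.sum_mul, ← Finset.mul_sum]
      congr 1
      · refine Finset.sum_congr rfl fun i _ => ?_; ring
      · ring
    have hb2 : ∑ j, (b j) ^ 2 = ‖a‖ ^ 2 := by
      rw [hnorm, Fin.sum_univ_castSucc, Fin.sum_univ_castSucc]
      simp [hb_def]
    have hp2 : ∑ j, (p j) ^ 2 = v ⬝ᵥ (H *ᵥ v) := by
      rw [hquad v, Fin.sum_univ_castSucc]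
      simp [hp_def]
    calc (g ⬝ᵥ v) ^ 2 = (∑ j, b j * p j) ^ 2 := by rw [hbp]
      _ ≤ (∑ j, (b j) ^ 2) * ∑ j, (p j) ^ 2 := Finset.sum_mul_sq_le_sq_mul_sq _ _ _
      _ = ‖a‖ ^ 2 * (v ⬝ᵥ (H *ᵥ v)) := by rw [hb2, hp2]
  -- conclude
  have hdet : IsUnit H.det := isUnit_iff_ne_zero.mpr (ne_of_gt hposdef.det_pos)
  set u : Fin d → ℝ := H⁻¹ *ᵥ g with hu_def
  have hHu : H *ᵥ u = g := by
    rw [hu_def, Matrix.mulVec_mulVec, Matrix.mul_nonsing_inv H hdet, Matrix.one_mulVec]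
  have hkeyu := hkey u
  rw [hHu] at hkeyu
  have hcomm : u ⬝ᵥ g = g ⬝ᵥ u := dotProduct_comm u g
  rw [hcomm] at hkeyu
  show g ⬝ᵥ u ≤ ‖a‖ ^ 2
  rcases le_or_gt (g ⬝ᵥ u) 0 with h | h
  · have : (0:ℝ) ≤ ‖a‖ ^ 2 := sq_nonneg _
    linarith
  · nlinarith [hkeyu]
end
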